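/- The number of binary necklaces of length n (binary strings of length n up to cyclic rotation) equals (1/n) * sum over divisors d of n of φ(n/d) * 2^d, where φ is Euler's totient function. -/

import Mathlib

/-- The setoid on length-`n` strings (functions `ZMod n → α`) identifying
strings that differ by a cyclic rotation. -/
def rotSetoid (n : ℕ) (α : Type*) : Setoid (ZMod n → α) where
  r f g := ∃ k : ZMod n, ∀ i, g i = f (i + k)
  iseqv := ⟨fun f => ⟨0, fun i => by rw [add_zero]⟩,
    fun {f g} ⟨k, h⟩ => ⟨-k, fun i => by rw [h (i + -k), neg_add_cancel_right]⟩,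
    fun {f g h} ⟨k, hk⟩ ⟨k', hk'⟩ => ⟨k' + k, fun i => by
      rw [hk' i, hk (i + k'), add_assoc]⟩⟩

open AddAction

instance rotAction (n : ℕ) : AddAction (ZMod n) (ZMod n → Fin 2) where
  vadd k f := fun i => f (i + k)
  zero_vadd f := funext fun i => by show f (i + 0) = f i; rw [add_zero]
  add_vadd a b f := funext fun i => by
    show f (i + (a + b)) = f (i + a + b); rw [add_assoc]

lemma rot_vadd_apply {n : ℕ} (k : ZMod n) (f : ZMod n → Fin 2) (i : ZMod n) :
    (k +ᵥ f) i = f (i + k) := rfl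

lemma fixed_zsmul {n : ℕ} {k : ZMod n} {f : ZMod n → Fin 2}
    (hf : ∀ i, f (i + k) = f i) (m : ℤ) (a : ZMod n) : f (a + m • k) = f a := by
  induction m using Int.induction_on with
  | zero => simp
  | succ m ih => rw [add_smul, one_smul, ← add_assoc, hf, ih]
  | pred m ih =>
      have h1 : a + (-(m : ℤ) - 1) • k + k = a + (-(m : ℤ)) • k := by
        rw [add_assoc]
        congr 1
        rw [sub_smul, one_smul, sub_add_cancel]
      have := hf (a + (-(m : ℤ) - 1) • k)
      rw [h1, ih] at this
      exact this.symm

def fixedEquiv (n : ℕ) (k : ZMod n) :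
    (fixedBy (ZMod n → Fin 2) k) ≃ ((ZMod n ⧸ AddSubgroup.zmultiples k) → Fin 2) where
  toFun f := Quotient.lift (f : ZMod n → Fin 2) (by
    intro a b hab
    have hab' : -a + b ∈ AddSubgroup.zmultiples k := QuotientAddGroup.leftRel_apply.mp hab
    obtain ⟨m, hm⟩ := AddSubgroup.mem_zmultiples_iff.mp hab'
    have hfix : ∀ i, (f : ZMod n → Fin 2) (i + k) = (f : ZMod n → Fin 2) i :=
      fun i => congrFun f.2 i
    have hb : b = a + m • k := by rw [hm]; abel
    rw [hb, fixed_zsmul hfix])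
  invFun g := ⟨g ∘ QuotientAddGroup.mk, by
    funext i
    show g (QuotientAddGroup.mk (i + k)) = g (QuotientAddGroup.mk i)
    congr 1
    rw [QuotientAddGroup.eq, AddSubgroup.mem_zmultiples_iff]
    exact ⟨-1, by simp⟩⟩
  left_inv f := Subtype.ext rfl
  right_inv g := funext fun x => by induction x using Quotient.ind; rfl

lemma card_fixed (n : ℕ) [NeZero n] (k : ZMod n) :
    Nat.card (fixedBy (ZMod n → Fin 2) k) = 2 ^ (n.gcd k.val) := by
  rw [Nat.card_congr (fixedEquiv n k), Nat.card_fun]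
  congr 1
  · simp
  have hord : addOrderOf k = n / n.gcd k.val := by
    conv_lhs => rw [← (ZMod.natCast_rightInverse k : ((k.val : ZMod n) = k))]
    exact ZMod.addOrderOf_coe k.val (NeZero.ne n)
  have hcard : Nat.card (AddSubgroup.zmultiples k) = n / n.gcd k.val := by
    rw [Nat.card_zmultiples, hord]
  have h := AddSubgroup.card_eq_card_quotient_mul_card_addSubgroup
    (AddSubgroup.zmultiples k)
  rw [hcard, Nat.card_zmod] at h
  have hg : n.gcd k.val ∣ n := Nat.gcd_dvd_left _ _
  have hg0 : 0 < n / n.gcd k.val :=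
    Nat.div_pos (Nat.le_of_dvd (Nat.pos_of_ne_zero (NeZero.ne n)) hg)
      (Nat.gcd_pos_of_pos_left _ (Nat.pos_of_ne_zero (NeZero.ne n)))
  rw [← Nat.div_eq_of_eq_mul_left hg0 h, Nat.div_div_self hg (NeZero.ne n)]

theorem binary_necklace_count (n : ℕ) [NeZero n] :
    (Nat.card (Quotient (rotSetoid n (Fin 2))) : ℚ) =
      (1 / (n : ℚ)) * ∑ d ∈ n.divisors, (Nat.totient (n / d) : ℚ) * 2 ^ d := by
  have hn : (n : ℚ) ≠ 0 := Nat.cast_ne_zero.mpr (NeZero.ne n)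
  -- identify the quotient with the orbit quotient
  have hquot : Nat.card (Quotient (rotSetoid n (Fin 2)))
      = Nat.card (orbitRel.Quotient (ZMod n) (ZMod n → Fin 2)) := by
    refine Nat.card_congr (Quotient.congrRight fun f g => ?_)
    rw [AddAction.orbitRel_apply, AddAction.mem_orbit_iff]
    constructor
    · rintro ⟨k, hk⟩
      refine ⟨-k, ?_⟩
      funext i
      show g (i + -k) = f i
      rw [hk (i + -k), neg_add_cancel_right]
    · rintro ⟨k, hk⟩
      refine ⟨-k, fun i => ?_⟩
      have h2 : f (i + -k) = g i := by
        rw [← hk]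
        show g (i + -k + k) = g i
        rw [neg_add_cancel_right]
      exact h2.symm
  haveI : ∀ k : ZMod n, Fintype (fixedBy (ZMod n → Fin 2) k) :=
    fun k => Fintype.ofFinite _
  haveI : Fintype (orbitRel.Quotient (ZMod n) (ZMod n → Fin 2)) := Fintype.ofFinite _
  have hburn := AddAction.sum_card_fixedBy_eq_card_orbits_mul_card_addGroup
    (ZMod n) (ZMod n → Fin 2)
  -- compute each fixed-point count
  have hfix : ∀ k : ZMod n, Fintype.card (fixedBy (ZMod n → Fin 2) k)
      = 2 ^ (n.gcd k.val) := by
    intro k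
    rw [← Nat.card_eq_fintype_card, card_fixed]
  have hsum1 : (∑ k : ZMod n, Fintype.card (fixedBy (ZMod n → Fin 2) k))
      = ∑ i ∈ Finset.range n, 2 ^ (n.gcd i) := by
    simp_rw [hfix]
    refine Finset.sum_nbij' (fun k => k.val) (fun i => (i : ZMod n)) ?_ ?_ ?_ ?_ ?_
    · intro k _; exact Finset.mem_range.mpr (ZMod.val_lt k)
    · intro i _; exact Finset.mem_univ _
    · intro k _; exact ZMod.natCast_rightInverse k
    · intro i hi; exact ZMod.val_cast_of_lt (Finset.mem_range.mp hi)
    · intro k _; rfl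
  have hsum2 : (∑ i ∈ Finset.range n, 2 ^ (n.gcd i))
      = ∑ d ∈ n.divisors, Nat.totient (n / d) * 2 ^ d := by
    rw [← Finset.sum_fiberwise_of_maps_to (g := fun i => n.gcd i)
      (t := n.divisors) (fun x _ => Nat.mem_divisors.mpr ⟨Nat.gcd_dvd_left _ _, NeZero.ne n⟩)]
    refine Finset.sum_congr rfl fun d hd => ?_
    have hdvd : d ∣ n := (Nat.mem_divisors.mp hd).1
    have hc : ∀ x ∈ Finset.filter (fun i => n.gcd i = d) (Finset.range n),
        2 ^ (n.gcd x) = 2 ^ d := fun x hx => by rw [(Finset.mem_filter.mp hx).2]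
    rw [Finset.sum_congr rfl hc, Finset.sum_const, smul_eq_mul,
      Nat.totient_div_of_dvd hdvd]
  have key : Fintype.card (orbitRel.Quotient (ZMod n) (ZMod n → Fin 2)) * n
      = ∑ d ∈ n.divisors, Nat.totient (n / d) * 2 ^ d := by
    rw [← hsum2, ← hsum1, hburn, ZMod.card]
  rw [hquot, Nat.card_eq_fintype_card, one_div, inv_mul_eq_div, eq_div_iff hn]
  exact_mod_cast key
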